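/- Let ‖·‖ be a compatible unitarily invariant norm with associated symmetric gauge function ψ, and let {V_i}_{i=1}^m be a uniformly weighted (m,1,d)-protocol (i.e. a uniform tight frame of m vectors, so V_i V_i* = d/m for all i) with m ≥ 2. Then max_{i≠j} |V_i V_j*| ≥ c_{m,1,d} and e_2^ψ(V) ≥ ψ( d/m + c_{m,1,d} , d/m − c_{m,1,d} ). If moreover V_i V_j* = c_{m,1,d}·q_{ij} with q_{ij} ∈ ℂ, |q_{ij}| = 1, for all i ≠ j, then equality holds in the e_2^ψ bound; and if ‖·‖ is 2-strongly strict, then conversely equality in the e_2^ψ bound implies |V_i V_j*| = c_{m,1,d} for all i ≠ j. -/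

import Mathlib

open Matrix BigOperators
open scoped ComplexOrder

noncomputable section

variable {𝕜 : Type*} [RCLike 𝕜]

/-- Sum of the `k` largest entries of a vector `x : Fin n → ℝ`,
as the supremum of the sums over subsets of cardinality `k`. -/
noncomputable def kMaxSum {n : ℕ} (x : Fin n → ℝ) (k : ℕ) : ℝ :=
  sSup ((fun t : Finset (Fin n) => ∑ i ∈ t, x i) '' {t : Finset (Fin n) | t.card = k})

/-- `x ≺_w y` : submajorization of real vectors. -/
def SubMajVec {n : ℕ} (x y : Fin n → ℝ) : Prop :=
  ∀ k : ℕ, k ≤ n → kMaxSum x k ≤ kMaxSum y k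

/-- `A ≺_w B` : submajorization of self-adjoint matrices (via eigenvalues). -/
def SubMajMat {n : ℕ} (A B : Matrix (Fin n) (Fin n) 𝕜) : Prop :=
  ∃ (hA : A.IsHermitian) (hB : B.IsHermitian), SubMajVec hA.eigenvalues hB.eigenvalues

/-- `A ≺ B` : majorization of self-adjoint matrices. -/
def MajMat {n : ℕ} (A B : Matrix (Fin n) (Fin n) 𝕜) : Prop :=
  SubMajMat A B ∧ A.trace = B.trace

/-- The q-potential `P_q(V) = Σ_{i,j} |V_i V_j*|²` of a reconstruction system. -/
noncomputable def qPotential {m l d : ℕ} (V : Fin m → Matrix (Fin l) (Fin d) 𝕜) :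
    Matrix (Fin l) (Fin l) 𝕜 :=
  ∑ i, ∑ j, (V i * (V j)ᴴ)ᴴ * (V i * (V j)ᴴ)

/-- `tr |A|² = tr(AᴴA)`, as a real number. -/
noncomputable def traceAbsSq {a b : ℕ} (A : Matrix (Fin a) (Fin b) 𝕜) : ℝ :=
  RCLike.re (Aᴴ * A).trace

/-- `tr |A| = tr((AᴴA)^{1/2})`, the sum of the singular values of `A`. -/
noncomputable def traceAbs {a b : ℕ} (A : Matrix (Fin a) (Fin b) 𝕜) : ℝ :=
  ∑ j, Real.sqrt ((Matrix.posSemidef_conjTranspose_mul_self A).1.eigenvalues j)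

/-- A unitarily invariant norm on `M_n(𝕜)`. -/
structure UINorm (n : ℕ) (𝕜 : Type*) [RCLike 𝕜] where
  N : Matrix (Fin n) (Fin n) 𝕜 → ℝ
  nonneg : ∀ A, 0 ≤ N A
  eq_zero : ∀ A, N A = 0 → A = 0
  triangle : ∀ A B, N (A + B) ≤ N A + N B
  smul_eq : ∀ (c : 𝕜) (A), N (c • A) = ‖c‖ * N A
  invariant : ∀ (A : Matrix (Fin n) (Fin n) 𝕜) (U W : Matrix.unitaryGroup (Fin n) 𝕜),
    N ((U : Matrix (Fin n) (Fin n) 𝕜) * A * (W : Matrix (Fin n) (Fin n) 𝕜)) = N A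

/-- `X ⊕ 0_t` : padding a square matrix with `t` zero rows and columns. -/
noncomputable def padMat {r : ℕ} (t : ℕ) (X : Matrix (Fin r) (Fin r) 𝕜) :
    Matrix (Fin (r + t)) (Fin (r + t)) 𝕜 :=
  Matrix.reindex finSumFinEquiv finSumFinEquiv (Matrix.fromBlocks X 0 0 0)

/-- A compatible unitarily invariant norm: a family of unitarily invariant norms,
one in each dimension, unchanged by adjoining zero rows and columns. -/
structure CUIN (𝕜 : Type*) [RCLike 𝕜] where
  N : ∀ n : ℕ, Matrix (Fin n) (Fin n) 𝕜 → ℝ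
  nonneg : ∀ n A, 0 ≤ N n A
  eq_zero : ∀ n A, N n A = 0 → A = 0
  triangle : ∀ n A B, N n (A + B) ≤ N n A + N n B
  smul_eq : ∀ n (c : 𝕜) (A), N n (c • A) = ‖c‖ * N n A
  invariant : ∀ n (A : Matrix (Fin n) (Fin n) 𝕜) (U W : Matrix.unitaryGroup (Fin n) 𝕜),
    N n ((U : Matrix (Fin n) (Fin n) 𝕜) * A * (W : Matrix (Fin n) (Fin n) 𝕜)) = N n A
  compatible : ∀ (r t : ℕ) (X : Matrix (Fin r) (Fin r) 𝕜), N (r + t) (padMat t X) = N r X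

namespace CUIN

/-- The associated symmetric gauge function, evaluated on a real vector:
`ψ(x) = ‖diag(x)‖`. -/
noncomputable def psi (Φ : CUIN 𝕜) {n : ℕ} (x : Fin n → ℝ) : ℝ :=
  Φ.N n (Matrix.diagonal fun i => (x i : 𝕜))

/-- `η_ψ(l) = ψ(e_l)/l = ‖I_l‖/l`. -/
noncomputable def eta (Φ : CUIN 𝕜) (l : ℕ) : ℝ := Φ.N l 1 / l

/-- A compatible u.i.n. is strict if `‖A‖ = tr(A)·η_ψ(l)` for positive semidefinite `A`
forces `A = (tr A / l)·I`. -/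
def Strict (Φ : CUIN 𝕜) : Prop :=
  ∀ (l : ℕ) (A : Matrix (Fin l) (Fin l) 𝕜), A.PosSemidef →
    Φ.N l A = RCLike.re A.trace * Φ.eta l → A = (A.trace / (l : 𝕜)) • 1

/-- A 2-strongly strict compatible u.i.n.: strict, and on `M_2` any two self-adjoint
matrices `A ≺ B` with equal norms are unitarily equivalent. -/
def TwoStronglyStrict (Φ : CUIN 𝕜) : Prop :=
  Φ.Strict ∧ ∀ A B : Matrix (Fin 2) (Fin 2) 𝕜, A.IsHermitian → B.IsHermitian →
    MajMat A B → Φ.N 2 A = Φ.N 2 B →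
    ∃ U ∈ Matrix.unitaryGroup (Fin 2) 𝕜, A = star U * B * U

end CUIN

/-- Worst-case reconstruction error for `p` lost packets:
`e_p^ψ(V) = max_{|K| = p} ‖V*V − V*E_K V‖ = max_{|K| = p} ‖Σ_{i ∈ K} Vᵢ*Vᵢ‖`. -/
noncomputable def errP {m l d : ℕ} (Φ : CUIN 𝕜) (p : ℕ)
    (V : Fin m → Matrix (Fin l) (Fin d) 𝕜) : ℝ :=
  sSup {r : ℝ | ∃ K : Finset (Fin m), K.card = p ∧ r = Φ.N d (∑ i ∈ K, (V i)ᴴ * V i)}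

/-- The constant `c_{m,l,d} = √( (d/((m−1)·m·l))·(1 − d/(ml)) )`. -/
noncomputable def cmld (m l d : ℕ) : ℝ :=
  Real.sqrt ((d : ℝ) / (((m : ℝ) - 1) * m * l) * (1 - (d : ℝ) / ((m : ℝ) * l)))

/-- A uniformly weighted projective rank-`l` `(m,l,d)`-protocol:
`Σᵢ Vᵢ*Vᵢ = I_d` and `VᵢVᵢ* = (d/(ml))·I_l` for every `i`. -/
def IsUWP {m l d : ℕ} (V : Fin m → Matrix (Fin l) (Fin d) 𝕜) : Prop :=
  (∑ i, (V i)ᴴ * V i = 1) ∧ ∀ i, V i * (V i)ᴴ = ((d : 𝕜) / ((m : 𝕜) * (l : 𝕜))) • 1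

/-- A uniformly weighted projective rank-`l` `(m,l,d)`-protocol, stated via projections:
`Σᵢ Vᵢ*Vᵢ = I_d` and `Vᵢ*Vᵢ = (d/(ml))·Pᵢ` with `Pᵢ` rank-`l` orthogonal projections. -/
def IsUWPProj {m l d : ℕ} (V : Fin m → Matrix (Fin l) (Fin d) 𝕜) : Prop :=
  (∑ i, (V i)ᴴ * V i = 1) ∧ ∀ i, ∃ P : Matrix (Fin d) (Fin d) 𝕜,
    Pᴴ = P ∧ P * P = P ∧ P.rank = l ∧ (V i)ᴴ * V i = ((d : 𝕜) / ((m : 𝕜) * (l : 𝕜))) • P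

/-- Padding a vector with zeros to length `d`. -/
def padVec {l : ℕ} (d : ℕ) (x : Fin l → ℝ) : Fin d → ℝ :=
  fun j => if h : (j : ℕ) < l then x ⟨j, h⟩ else 0


section Aux

open Matrix

variable {n : ℕ}

lemma permMat_star (σ : Equiv.Perm (Fin n)) :
    star (σ.toPEquiv.toMatrix : Matrix (Fin n) (Fin n) ℂ) = σ.symm.toPEquiv.toMatrix := by
  ext i j
  simp only [Matrix.star_apply, PEquiv.toMatrix_apply, Equiv.toPEquiv_apply, Option.mem_def,
    Option.some_inj]
  have hiff : ((Equiv.symm σ) i = j) ↔ (σ j = i) := by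
    rw [Equiv.symm_apply_eq]; exact eq_comm
  split_ifs with h1 h2 h3 <;> simp_all [hiff]

lemma permMat_mem_unitary (σ : Equiv.Perm (Fin n)) :
    (σ.toPEquiv.toMatrix : Matrix (Fin n) (Fin n) ℂ) ∈ Matrix.unitaryGroup (Fin n) ℂ := by
  rw [Matrix.mem_unitaryGroup_iff, permMat_star, ← PEquiv.toMatrix_trans,
    ← Equiv.toPEquiv_trans, Equiv.self_trans_symm, Equiv.toPEquiv_refl, PEquiv.toMatrix_refl]

lemma N_diag_perm (Φ : CUIN ℂ) (v : Fin n → ℂ) (σ : Equiv.Perm (Fin n)) :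
    Φ.N n (Matrix.diagonal (v ∘ σ)) = Φ.N n (Matrix.diagonal v) := by
  have key : Matrix.diagonal (v ∘ σ) =
      (σ.toPEquiv.toMatrix : Matrix (Fin n) (Fin n) ℂ) * Matrix.diagonal v *
        (σ.symm.toPEquiv.toMatrix : Matrix (Fin n) (Fin n) ℂ) := by
    rw [PEquiv.toMatrix_toPEquiv_mul, PEquiv.mul_toMatrix_toPEquiv, Equiv.symm_symm]
    ext i j
    simp [Matrix.submatrix_apply, Matrix.diagonal_apply, σ.injective.eq_iff]
  rw [key]
  exact Φ.invariant n (Matrix.diagonal v) ⟨_, permMat_mem_unitary σ⟩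
    ⟨_, permMat_mem_unitary σ.symm⟩

lemma N_spectral (Φ : CUIN ℂ) (A : Matrix (Fin n) (Fin n) ℂ) (hA : A.IsHermitian) :
    Φ.N n A = Φ.N n (Matrix.diagonal fun i => (hA.eigenvalues i : ℂ)) := by
  conv_lhs => rw [hA.spectral_theorem, Unitary.conjStarAlgAut_apply]
  have h := Φ.invariant n (Matrix.diagonal (RCLike.ofReal ∘ hA.eigenvalues))
    hA.eigenvectorUnitary (star hA.eigenvectorUnitary)
  rw [Unitary.coe_star] at h
  rw [h]
  rfl

lemma herm_trace (A : Matrix (Fin n) (Fin n) ℂ) (hA : A.IsHermitian) :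
    A.trace = ∑ i, (hA.eigenvalues i : ℂ) := by
  conv_lhs => rw [hA.spectral_theorem, Unitary.conjStarAlgAut_apply]
  rw [Matrix.trace_mul_cycle]
  rw [show star (hA.eigenvectorUnitary : Matrix (Fin n) (Fin n) ℂ) *
      (hA.eigenvectorUnitary : Matrix (Fin n) (Fin n) ℂ) = 1 from
    Matrix.mem_unitaryGroup_iff'.mp hA.eigenvectorUnitary.2, one_mul, Matrix.trace_diagonal]
  rfl

lemma herm_trace_sq (A : Matrix (Fin n) (Fin n) ℂ) (hA : A.IsHermitian) :
    (A * A).trace = ∑ i, ((hA.eigenvalues i : ℂ))^2 := by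
  have hU : (hA.eigenvectorUnitary : Matrix (Fin n) (Fin n) ℂ) *
      star (hA.eigenvectorUnitary : Matrix (Fin n) (Fin n) ℂ) = 1 :=
    Matrix.mem_unitaryGroup_iff.mp hA.eigenvectorUnitary.2
  have hU' : star (hA.eigenvectorUnitary : Matrix (Fin n) (Fin n) ℂ) *
      (hA.eigenvectorUnitary : Matrix (Fin n) (Fin n) ℂ) = 1 :=
    Matrix.mem_unitaryGroup_iff'.mp hA.eigenvectorUnitary.2
  set U := (hA.eigenvectorUnitary : Matrix (Fin n) (Fin n) ℂ) with hUdef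
  set D := (Matrix.diagonal (RCLike.ofReal ∘ hA.eigenvalues) : Matrix (Fin n) (Fin n) ℂ) with hDdef
  have h1 : A * A = U * (D * D) * star U := by
    conv_lhs => rw [hA.spectral_theorem]
    calc (U * D * star U) * (U * D * star U)
        = U * D * (star U * U) * D * star U := by
          simp only [Matrix.mul_assoc]
      _ = U * (D * D) * star U := by rw [hU']; simp only [Matrix.mul_one, Matrix.mul_assoc]
  rw [h1, Matrix.trace_mul_cycle, ← Matrix.mul_assoc, hU', one_mul]
  rw [Matrix.diagonal_mul_diagonal, Matrix.trace_diagonal]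
  simp [sq]

lemma pair_eq {p q P Q : ℝ} (hsum : p + q = P + Q) (hsq : p^2 + q^2 = P^2 + Q^2) :
    (p = P ∧ q = Q) ∨ (p = Q ∧ q = P) := by
  have h : (p - P) * (p - Q) = 0 := by
    linear_combination ((p - q)/2 - (P + Q)/2) * hsum + (1/2) * hsq
  rcases mul_eq_zero.mp h with h' | h'
  · left; constructor <;> linarith
  · right; constructor <;> linarith

end Aux

section Aux2

open Matrix

lemma psi_eq (Φ : CUIN ℂ) {n : ℕ} (x : Fin n → ℝ) :
    Φ.psi x = Φ.N n (Matrix.diagonal fun i => ((x i : ℝ) : ℂ)) := rfl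

lemma pad_psi (Φ : CUIN ℂ) (e : ℕ) (x : Fin 2 → ℝ) :
    Φ.N (2 + e) (Matrix.diagonal fun i => ((padVec (2 + e) x i : ℝ) : ℂ)) = Φ.psi x := by
  rw [psi_eq, ← Φ.compatible 2 e (Matrix.diagonal fun i => ((x i : ℝ) : ℂ))]
  congr 1
  rw [padMat]
  have hb : (Matrix.fromBlocks (Matrix.diagonal fun i => ((x i : ℝ) : ℂ)) 0 0 0 :
      Matrix (Fin 2 ⊕ Fin e) (Fin 2 ⊕ Fin e) ℂ) =
      Matrix.diagonal (Sum.elim (fun i => ((x i : ℝ) : ℂ)) (fun _ => 0)) := by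
    rw [← Matrix.diagonal_zero, Matrix.fromBlocks_diagonal]
  rw [hb, Matrix.reindex_apply, Matrix.submatrix_diagonal_equiv]
  refine congrArg Matrix.diagonal (funext fun i => ?_)
  simp only [Function.comp_apply]
  rcases h : finSumFinEquiv.symm i with j | j
  · have hi : i = Fin.castAdd e j := by
      have := congrArg finSumFinEquiv h; simpa using this
    subst hi
    rw [Sum.elim_inl]
    have hc : ((Fin.castAdd e j : Fin (2 + e)) : ℕ) < 2 := by simpa using j.isLt
    rw [padVec, dif_pos hc]
    norm_cast
  · have hi : i = Fin.natAdd 2 j := by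
      have := congrArg finSumFinEquiv h; simpa using this
    subst hi
    rw [Sum.elim_inr]
    have hc : ¬ (((Fin.natAdd 2 j : Fin (2 + e)) : ℕ) < 2) := by simp; omega
    rw [padVec, dif_neg hc]
    norm_num

lemma exists_perm_pad {d : ℕ} (hd : 2 ≤ d) (eig : Fin d → ℝ) (p q : ℝ)
    (f₁ f₂ : Fin d) (hne : f₁ ≠ f₂) (h1 : eig f₁ = p) (h2 : eig f₂ = q)
    (h0 : ∀ i, i ≠ f₁ → i ≠ f₂ → eig i = 0) :
    ∃ σ : Equiv.Perm (Fin d), ∀ i, eig (σ i) = padVec d ![p, q] i := by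
  have h0d : 0 < d := by omega
  have h1d : 1 < d := by omega
  set z0 : Fin d := ⟨0, h0d⟩ with hz0
  set z1 : Fin d := ⟨1, h1d⟩ with hz1
  have hz01 : z0 ≠ z1 := by simp [hz0, hz1, Fin.ext_iff]
  set τ₁ : Equiv.Perm (Fin d) := Equiv.swap z0 f₁ with hτ₁
  set τ₂ : Equiv.Perm (Fin d) := Equiv.swap z1 (τ₁ f₂) with hτ₂
  refine ⟨τ₂.trans τ₁, ?_⟩
  have hτ₁f₂ : τ₁ f₂ ≠ z0 := by
    intro hcon
    have hf : f₂ = τ₁ z0 := by rw [← hcon, hτ₁, Equiv.swap_apply_self]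
    rw [hτ₁, Equiv.swap_apply_left] at hf
    exact hne hf.symm
  have hσ0 : (τ₂.trans τ₁) z0 = f₁ := by
    have h20 : τ₂ z0 = z0 := Equiv.swap_apply_of_ne_of_ne hz01 (Ne.symm hτ₁f₂)
    simp only [Equiv.trans_apply, h20, hτ₁, Equiv.swap_apply_left]
  have hσ1 : (τ₂.trans τ₁) z1 = f₂ := by
    have h21 : τ₂ z1 = τ₁ f₂ := Equiv.swap_apply_left _ _
    simp only [Equiv.trans_apply, h21, hτ₁, Equiv.swap_apply_self]
  intro i
  by_cases hi0 : i = z0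
  · subst hi0
    rw [hσ0, h1, padVec]
    rw [dif_pos (show ((z0 : Fin d) : ℕ) < 2 by simp [hz0])]
    rfl
  by_cases hi1 : i = z1
  · subst hi1
    rw [hσ1, h2, padVec]
    rw [dif_pos (show ((z1 : Fin d) : ℕ) < 2 by simp [hz1])]
    rfl
  · have hgt : ¬ ((i : ℕ) < 2) := by
      intro hlt
      interval_cases h : (i : ℕ)
      · exact hi0 (by simp [hz0, Fin.ext_iff, h])
      · exact hi1 (by simp [hz1, Fin.ext_iff, h])
    rw [padVec, dif_neg hgt]
    apply h0
    · intro hcon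
      have : (τ₂.trans τ₁) i = (τ₂.trans τ₁) z0 := by rw [hσ0, hcon]
      exact hi0 ((τ₂.trans τ₁).injective this)
    · intro hcon
      have : (τ₂.trans τ₁) i = (τ₂.trans τ₁) z1 := by rw [hσ1, hcon]
      exact hi1 ((τ₂.trans τ₁).injective this)

end Aux2

section Aux3

open Matrix

lemma psi_mono (Φ : CUIN ℂ) (s cc t : ℝ) (h0 : 0 ≤ cc) (hct : cc ≤ t) :
    Φ.psi ![s + cc, s - cc] ≤ Φ.psi ![s + t, s - t] := by
  rcases eq_or_lt_of_le (h0.trans hct) with ht | ht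
  · have : cc = 0 := le_antisymm (by rw [ht]; exact hct) h0
    rw [this, ← ht]
  · set μ : ℝ := (t + cc) / (2 * t) with hμ
    set ν : ℝ := (t - cc) / (2 * t) with hν
    have ht0 : t ≠ 0 := ne_of_gt ht
    have hμ0 : 0 ≤ μ := by positivity
    have hν0 : 0 ≤ ν := div_nonneg (by linarith) (by linarith)
    have hμν : μ + ν = 1 := by rw [hμ, hν, ← add_div]; field_simp; ring
    have e1 : μ * (s + t) + ν * (s - t) = s + cc := by rw [hμ, hν]; field_simp; ring
    have e2 : μ * (s - t) + ν * (s + t) = s - cc := by rw [hμ, hν]; field_simp; ring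
    have e1' : ((s + cc : ℝ) : ℂ) = (μ : ℂ) * ((s + t : ℝ) : ℂ) + (ν : ℂ) * ((s - t : ℝ) : ℂ) := by
      have := congrArg (fun r : ℝ => (r : ℂ)) e1
      push_cast at this ⊢
      linear_combination -this
    have e2' : ((s - cc : ℝ) : ℂ) = (μ : ℂ) * ((s - t : ℝ) : ℂ) + (ν : ℂ) * ((s + t : ℝ) : ℂ) := by
      have := congrArg (fun r : ℝ => (r : ℂ)) e2
      push_cast at this ⊢
      linear_combination -this
    set v : Fin 2 → ℂ := fun i => (((![s + t, s - t]) i : ℝ) : ℂ) with hv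
    set v' : Fin 2 → ℂ := fun i => (((![s - t, s + t]) i : ℝ) : ℂ) with hv'
    have hvec : (fun i => (((![s + cc, s - cc]) i : ℝ) : ℂ)) = (μ : ℂ) • v + (ν : ℂ) • v' := by
      funext i
      fin_cases i
      · simp only [hv, hv', Pi.add_apply, Pi.smul_apply, smul_eq_mul]
        norm_num
        push_cast at e1' ⊢
        linear_combination e1'
      · simp only [hv, hv', Pi.add_apply, Pi.smul_apply, smul_eq_mul]
        norm_num
        push_cast at e2' ⊢
        linear_combination e2'
    have hperm : v' = v ∘ (Equiv.swap (0 : Fin 2) 1) := by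
      funext i
      fin_cases i <;> simp [hv, hv', Equiv.swap_apply_left, Equiv.swap_apply_right]
    have hN' : Φ.N 2 (Matrix.diagonal v') = Φ.N 2 (Matrix.diagonal v) := by
      rw [hperm]; exact N_diag_perm Φ v (Equiv.swap 0 1)
    have hnormμ : ‖(μ : ℂ)‖ = μ := by rw [Complex.norm_real]; exact abs_of_nonneg hμ0
    have hnormν : ‖(ν : ℂ)‖ = ν := by rw [Complex.norm_real]; exact abs_of_nonneg hν0
    calc Φ.psi ![s + cc, s - cc]
        = Φ.N 2 (Matrix.diagonal fun i => (((![s + cc, s - cc]) i : ℝ) : ℂ)) := psi_eq Φ _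
      _ = Φ.N 2 ((μ : ℂ) • Matrix.diagonal v + (ν : ℂ) • Matrix.diagonal v') := by
          rw [hvec]
          congr 1
          ext i j
          by_cases h : i = j <;> simp [Matrix.diagonal_apply, h]
      _ ≤ Φ.N 2 ((μ : ℂ) • Matrix.diagonal v) + Φ.N 2 ((ν : ℂ) • Matrix.diagonal v') :=
          Φ.triangle 2 _ _
      _ = μ * Φ.N 2 (Matrix.diagonal v) + ν * Φ.N 2 (Matrix.diagonal v) := by
          rw [Φ.smul_eq, Φ.smul_eq, hnormμ, hnormν, hN']
      _ = Φ.N 2 (Matrix.diagonal v) := by rw [← add_mul, hμν, one_mul]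
      _ = Φ.psi ![s + t, s - t] := (psi_eq Φ _).symm

end Aux3

section Aux4

open Matrix

lemma kMaxSum_zero (x : Fin 2 → ℝ) : kMaxSum x 0 = 0 := by
  rw [kMaxSum]
  have hset : {t : Finset (Fin 2) | t.card = 0} = {∅} := by
    ext t; simp [Finset.card_eq_zero]
  rw [hset, Set.image_singleton, Finset.sum_empty, csSup_singleton]

lemma kMaxSum_one (x : Fin 2 → ℝ) : kMaxSum x 1 = max (x 0) (x 1) := by
  rw [kMaxSum]
  have hset : ((fun t : Finset (Fin 2) => ∑ i ∈ t, x i) '' {t : Finset (Fin 2) | t.card = 1}) =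
      {x 0, x 1} := by
    ext r
    constructor
    · rintro ⟨t, ht, rfl⟩
      obtain ⟨i, rfl⟩ := Finset.card_eq_one.mp ht
      simp only [Finset.sum_singleton]
      fin_cases i
      · exact Or.inl rfl
      · exact Or.inr rfl
    · rintro (rfl | rfl)
      · exact ⟨{0}, Finset.card_singleton 0, by simp⟩
      · exact ⟨{1}, Finset.card_singleton 1, by simp⟩
  rw [hset, csSup_pair]

lemma kMaxSum_two' (x : Fin 2 → ℝ) : kMaxSum x 2 = x 0 + x 1 := by
  rw [kMaxSum]
  have hset : ((fun t : Finset (Fin 2) => ∑ i ∈ t, x i) '' {t : Finset (Fin 2) | t.card = 2}) =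
      {x 0 + x 1} := by
    ext r
    constructor
    · rintro ⟨t, ht, rfl⟩
      have : t = Finset.univ := (Finset.card_eq_iff_eq_univ t).mp (by simpa using ht)
      subst this
      simp [Fin.sum_univ_two]
    · rintro rfl
      exact ⟨Finset.univ, by simp, by simp [Fin.sum_univ_two]⟩
  rw [hset, csSup_singleton]

lemma submaj_two {x y : Fin 2 → ℝ} (h1 : x 0 ≤ max (y 0) (y 1)) (h2 : x 1 ≤ max (y 0) (y 1))
    (h3 : x 0 + x 1 ≤ y 0 + y 1) : SubMajVec x y := by
  intro k hk
  interval_cases k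
  · rw [kMaxSum_zero, kMaxSum_zero]
  · rw [kMaxSum_one, kMaxSum_one]
    exact max_le h1 h2
  · rw [kMaxSum_two', kMaxSum_two']
    exact h3

lemma diag_real_herm {n : ℕ} (v : Fin n → ℝ) :
    (Matrix.diagonal fun i => ((v i : ℝ) : ℂ)).IsHermitian := by
  exact Matrix.isHermitian_diagonal_of_self_adjoint _
    (funext fun i => Complex.conj_ofReal (v i))

lemma diag2_eigen (u : Fin 2 → ℝ)
    (h : (Matrix.diagonal fun i => ((u i : ℝ) : ℂ)).IsHermitian) :
    (h.eigenvalues 0 = u 0 ∧ h.eigenvalues 1 = u 1) ∨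
    (h.eigenvalues 0 = u 1 ∧ h.eigenvalues 1 = u 0) := by
  have htr := herm_trace _ h
  rw [Matrix.trace_diagonal, Fin.sum_univ_two, Fin.sum_univ_two] at htr
  have htr2 := herm_trace_sq _ h
  rw [Matrix.diagonal_mul_diagonal, Matrix.trace_diagonal, Fin.sum_univ_two,
    Fin.sum_univ_two] at htr2
  have hr : u 0 + u 1 = h.eigenvalues 0 + h.eigenvalues 1 := by
    have : ((u 0 + u 1 : ℝ) : ℂ) = ((h.eigenvalues 0 + h.eigenvalues 1 : ℝ) : ℂ) := by
      push_cast; exact htr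
    exact_mod_cast this
  have hr2 : (u 0)^2 + (u 1)^2 = (h.eigenvalues 0)^2 + (h.eigenvalues 1)^2 := by
    have : (((u 0)^2 + (u 1)^2 : ℝ) : ℂ) =
        (((h.eigenvalues 0)^2 + (h.eigenvalues 1)^2 : ℝ) : ℂ) := by
      push_cast
      calc ((u 0 : ℂ))^2 + ((u 1 : ℂ))^2 = (u 0 : ℂ) * (u 0 : ℂ) + (u 1 : ℂ) * (u 1 : ℂ) := by
            ring
        _ = ((h.eigenvalues 0 : ℂ))^2 + ((h.eigenvalues 1 : ℂ))^2 := by rw [htr2]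
    exact_mod_cast this
  rcases pair_eq hr.symm hr2.symm with ⟨ha, hb⟩ | ⟨ha, hb⟩
  · exact Or.inl ⟨ha, hb⟩
  · exact Or.inr ⟨ha, hb⟩

lemma maj_two (s cc t : ℝ) (h0 : 0 ≤ cc) (hct : cc ≤ t) :
    MajMat (Matrix.diagonal fun i => (((![s + cc, s - cc]) i : ℝ) : ℂ))
      (Matrix.diagonal fun i => (((![s + t, s - t]) i : ℝ) : ℂ)) := by
  have hA := diag_real_herm ![s + cc, s - cc]
  have hB := diag_real_herm ![s + t, s - t]
  constructor
  · refine ⟨hA, hB, ?_⟩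
    have hAe := diag2_eigen ![s + cc, s - cc] hA
    have hBe := diag2_eigen ![s + t, s - t] hB
    simp only [Matrix.cons_val_zero, Matrix.cons_val_one, Matrix.head_cons] at hAe hBe
    have hmax : max (hB.eigenvalues 0) (hB.eigenvalues 1) = s + t := by
      rcases hBe with ⟨hb0, hb1⟩ | ⟨hb0, hb1⟩ <;> rw [hb0, hb1]
      · exact max_eq_left (by linarith)
      · exact max_eq_right (by linarith)
    refine submaj_two ?_ ?_ ?_
    · rw [hmax]; rcases hAe with ⟨ha0, _⟩ | ⟨ha0, _⟩ <;> rw [ha0] <;> linarith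
    · rw [hmax]; rcases hAe with ⟨_, ha1⟩ | ⟨_, ha1⟩ <;> rw [ha1] <;> linarith
    · rcases hAe with ⟨ha0, ha1⟩ | ⟨ha0, ha1⟩ <;> rcases hBe with ⟨hb0, hb1⟩ | ⟨hb0, hb1⟩ <;>
        rw [ha0, ha1, hb0, hb1] <;> linarith
  · rw [Matrix.trace_diagonal, Matrix.trace_diagonal, Fin.sum_univ_two, Fin.sum_univ_two]
    simp only [Matrix.cons_val_zero, Matrix.cons_val_one, Matrix.head_cons]
    push_cast
    ring

lemma trace_conj_sq {n : ℕ} (A B U : Matrix (Fin n) (Fin n) ℂ)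
    (hU : U ∈ Matrix.unitaryGroup (Fin n) ℂ) (hAB : A = star U * B * U) :
    (A * A).trace = (B * B).trace := by
  have hU1 : U * star U = 1 := Matrix.mem_unitaryGroup_iff.mp hU
  have h1 : A * A = star U * (B * B) * U := by
    rw [hAB]
    calc (star U * B * U) * (star U * B * U)
        = star U * B * (U * star U) * B * U := by simp only [Matrix.mul_assoc]
      _ = star U * (B * B) * U := by rw [hU1]; simp only [Matrix.mul_one, Matrix.mul_assoc]
  rw [h1, Matrix.trace_mul_cycle, hU1, one_mul]

end Aux4

section Aux5

open Matrix

lemma matrix_rank_add_le {a b : ℕ} (A B : Matrix (Fin a) (Fin b) ℂ) :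
    (A + B).rank ≤ A.rank + B.rank := by
  rw [Matrix.rank, Matrix.rank, Matrix.rank, Matrix.mulVecLin_add]
  have hr : LinearMap.range (A.mulVecLin + B.mulVecLin) ≤
      LinearMap.range A.mulVecLin ⊔ LinearMap.range B.mulVecLin := by
    rintro x ⟨y, rfl⟩
    exact Submodule.mem_sup.mpr ⟨A.mulVecLin y, ⟨y, rfl⟩, B.mulVecLin y, ⟨y, rfl⟩, rfl⟩
  exact (Submodule.finrank_mono hr).trans
    (Submodule.finrank_add_le_finrank_add_finrank _ _)

lemma mul_conj_norm (z : ℂ) : z * (starRingEnd ℂ) z = ((‖z‖^2 : ℝ) : ℂ) := by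
  rw [Complex.mul_conj, Complex.sq_norm]

lemma trace_1x1_mul_conj (B : Matrix (Fin 1) (Fin 1) ℂ) :
    (B * Bᴴ).trace = ((‖B 0 0‖^2 : ℝ) : ℂ) := by
  rw [Matrix.trace_fin_one, Matrix.mul_apply, Fin.sum_univ_one, Matrix.conjTranspose_apply]
  exact mul_conj_norm _

lemma normS (Φ : CUIN ℂ) {d : ℕ} (hd : 2 ≤ d) (s t : ℝ) (hs : 0 < s)
    (u w : Matrix (Fin 1) (Fin d) ℂ)
    (hu : u * uᴴ = ((s : ℝ) : ℂ) • 1) (hw : w * wᴴ = ((s : ℝ) : ℂ) • 1)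
    (ht : ‖(u * wᴴ) 0 0‖ = t) :
    Φ.N d (uᴴ * u + wᴴ * w) = Φ.psi ![s + t, s - t] := by
  obtain ⟨e, rfl⟩ : ∃ e, d = 2 + e := ⟨d - 2, by omega⟩
  have ht0 : 0 ≤ t := ht ▸ norm_nonneg _
  set S := uᴴ * u + wᴴ * w with hSdef
  have hH : S.IsHermitian :=
    (Matrix.isHermitian_conjTranspose_mul_self u).add (Matrix.isHermitian_conjTranspose_mul_self w)
  have hP : S.PosSemidef :=
    (Matrix.posSemidef_conjTranspose_mul_self u).add (Matrix.posSemidef_conjTranspose_mul_self w)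
  have htr_u : (uᴴ * u).trace = ((s : ℝ) : ℂ) := by
    rw [Matrix.trace_mul_comm, hu, Matrix.trace_smul, Matrix.trace_one]
    simp
  have htr_w : (wᴴ * w).trace = ((s : ℝ) : ℂ) := by
    rw [Matrix.trace_mul_comm, hw, Matrix.trace_smul, Matrix.trace_one]
    simp
  have htrS : S.trace = ((2 * s : ℝ) : ℂ) := by
    rw [hSdef, Matrix.trace_add, htr_u, htr_w]; push_cast; ring
  have hcross : (uᴴ * u * (wᴴ * w)).trace = ((t ^ 2 : ℝ) : ℂ) := by
    have h1 : uᴴ * u * (wᴴ * w) = uᴴ * (u * wᴴ * w) := by simp only [Matrix.mul_assoc]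
    rw [h1, Matrix.trace_mul_comm]
    have h2 : u * wᴴ * w * uᴴ = (u * wᴴ) * (u * wᴴ)ᴴ := by
      rw [Matrix.conjTranspose_mul, Matrix.conjTranspose_conjTranspose, Matrix.mul_assoc]
    rw [h2, trace_1x1_mul_conj, ht]
  have hcross' : (wᴴ * w * (uᴴ * u)).trace = ((t ^ 2 : ℝ) : ℂ) := by
    have h1 : wᴴ * w * (uᴴ * u) = wᴴ * (w * uᴴ * u) := by simp only [Matrix.mul_assoc]
    rw [h1, Matrix.trace_mul_comm]
    have h2 : w * uᴴ * u * wᴴ = (w * uᴴ) * (w * uᴴ)ᴴ := by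
      rw [Matrix.conjTranspose_mul, Matrix.conjTranspose_conjTranspose, Matrix.mul_assoc]
    rw [h2, trace_1x1_mul_conj]
    have h3 : ‖(w * uᴴ) 0 0‖ = t := by
      rw [show w * uᴴ = (u * wᴴ)ᴴ by
        rw [Matrix.conjTranspose_mul, Matrix.conjTranspose_conjTranspose]]
      rw [Matrix.conjTranspose_apply, norm_star, ht]
    rw [h3]
  have hsq_u : (uᴴ * u * (uᴴ * u)).trace = ((s ^ 2 : ℝ) : ℂ) := by
    have h1 : uᴴ * u * (uᴴ * u) = uᴴ * (u * (uᴴ * u)) := by simp only [Matrix.mul_assoc]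
    rw [h1, Matrix.trace_mul_comm]
    have h2 : u * (uᴴ * u) * uᴴ = (u * uᴴ) * (u * uᴴ) := by simp only [Matrix.mul_assoc]
    rw [h2, hu]
    rw [Matrix.smul_mul, Matrix.mul_smul, smul_smul, one_mul, Matrix.trace_smul,
      Matrix.trace_one]
    push_cast
    simp [sq]
  have hsq_w : (wᴴ * w * (wᴴ * w)).trace = ((s ^ 2 : ℝ) : ℂ) := by
    have h1 : wᴴ * w * (wᴴ * w) = wᴴ * (w * (wᴴ * w)) := by simp only [Matrix.mul_assoc]
    rw [h1, Matrix.trace_mul_comm]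
    have h2 : w * (wᴴ * w) * wᴴ = (w * wᴴ) * (w * wᴴ) := by simp only [Matrix.mul_assoc]
    rw [h2, hw]
    rw [Matrix.smul_mul, Matrix.mul_smul, smul_smul, one_mul, Matrix.trace_smul,
      Matrix.trace_one]
    push_cast
    simp [sq]
  have htrS2 : (S * S).trace = ((2 * s ^ 2 + 2 * t ^ 2 : ℝ) : ℂ) := by
    have hexp : S * S = uᴴ * u * (uᴴ * u) + uᴴ * u * (wᴴ * w) + wᴴ * w * (uᴴ * u)
        + wᴴ * w * (wᴴ * w) := by
      rw [hSdef]
      rw [Matrix.add_mul, Matrix.mul_add, Matrix.mul_add]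
      abel
    rw [hexp, Matrix.trace_add, Matrix.trace_add, Matrix.trace_add,
      hsq_u, hcross, hcross', hsq_w]
    push_cast
    ring
  set eig := hH.eigenvalues with heig
  have hsum : ∑ i, eig i = 2 * s := by
    have h := herm_trace S hH
    rw [htrS] at h
    have h2 : ((2 * s : ℝ) : ℂ) = ((∑ i, eig i : ℝ) : ℂ) := by
      rw [h]; push_cast; rfl
    exact_mod_cast h2.symm
  have hsq : ∑ i, (eig i) ^ 2 = 2 * s ^ 2 + 2 * t ^ 2 := by
    have h := herm_trace_sq S hH
    rw [htrS2] at h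
    have h2 : ((2 * s ^ 2 + 2 * t ^ 2 : ℝ) : ℂ) = ((∑ i, (eig i) ^ 2 : ℝ) : ℂ) := by
      rw [h]; push_cast; rfl
    exact_mod_cast h2.symm
  have hnn : ∀ i, 0 ≤ eig i := fun i => hP.eigenvalues_nonneg i
  have hrank2 : S.rank ≤ 2 := by
    have h1 : (uᴴ * u).rank ≤ 1 :=
      le_trans (Matrix.rank_mul_le_left uᴴ u) (by simpa using Matrix.rank_le_card_width uᴴ)
    have h2 : (wᴴ * w).rank ≤ 1 :=
      le_trans (Matrix.rank_mul_le_left wᴴ w) (by simpa using Matrix.rank_le_card_width wᴴ)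
    exact le_trans (matrix_rank_add_le _ _) (by omega)
  classical
  set T := Finset.univ.filter (fun i => eig i ≠ 0) with hTdef
  have hcard : T.card ≤ 2 := by
    have h := hH.rank_eq_card_non_zero_eigs
    rw [Fintype.card_subtype] at h
    have hTF : T = Finset.univ.filter (fun i => hH.eigenvalues i ≠ 0) := rfl
    rw [hTF, ← h]
    exact hrank2
  have hTout : ∀ i, i ∉ T → eig i = 0 := by
    intro i hi
    by_contra hcon
    exact hi (Finset.mem_filter.mpr ⟨Finset.mem_univ i, hcon⟩)
  have hTsum : ∑ i ∈ T, eig i = 2 * s := by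
    rw [← hsum]
    exact Finset.sum_subset (Finset.subset_univ T) (fun x _ hx => hTout x hx)
  have hTsq : ∑ i ∈ T, (eig i) ^ 2 = 2 * s ^ 2 + 2 * t ^ 2 := by
    rw [← hsq]
    exact Finset.sum_subset (Finset.subset_univ T) (fun x _ hx => by rw [hTout x hx]; ring)
  have hTne : T.Nonempty := by
    rw [Finset.nonempty_iff_ne_empty]
    intro hcon
    rw [hcon, Finset.sum_empty] at hTsum
    linarith
  have hperm : ∃ σ : Equiv.Perm (Fin (2 + e)), ∀ i,
      eig (σ i) = padVec (2 + e) ![s + t, s - t] i := by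
    have hcases : T.card = 1 ∨ T.card = 2 := by
      have := Finset.card_pos.mpr hTne
      omega
    rcases hcases with h1 | h2
    · obtain ⟨f, hf⟩ := Finset.card_eq_one.mp h1
      have hfe : eig f = 2 * s := by rw [← hTsum, hf, Finset.sum_singleton]
      have hzero : ∀ i, i ≠ f → eig i = 0 := by
        intro i hi
        apply hTout
        rw [hf]
        simp [hi]
      have hts : t = s := by
        have h2 : (eig f) ^ 2 = 2 * s ^ 2 + 2 * t ^ 2 := by
          rw [← hTsq, hf, Finset.sum_singleton]
        rw [hfe] at h2
        have ht2 : t ^ 2 = s ^ 2 := by nlinarith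
        calc t = Real.sqrt (t ^ 2) := (Real.sqrt_sq ht0).symm
          _ = Real.sqrt (s ^ 2) := by rw [ht2]
          _ = s := Real.sqrt_sq hs.le
      set z0 : Fin (2 + e) := ⟨0, by omega⟩ with hz0
      set z1 : Fin (2 + e) := ⟨1, by omega⟩ with hz1
      have hz01 : z0 ≠ z1 := by simp [hz0, hz1, Fin.ext_iff]
      set f₂ : Fin (2 + e) := if f = z0 then z1 else z0 with hf₂
      have hff₂ : f ≠ f₂ := by
        by_cases hfz : f = z0
        · rw [hf₂, if_pos hfz, hfz]; exact hz01
        · rw [hf₂, if_neg hfz]; exact hfz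
      exact exists_perm_pad hd eig (s + t) (s - t) f f₂ hff₂
        (by rw [hfe, hts]; ring) (by rw [hzero f₂ (Ne.symm hff₂), hts]; ring)
        (fun i hif _ => hzero i hif)
    · obtain ⟨f₁, f₂, hne, hT2⟩ := Finset.card_eq_two.mp h2
      have hp : eig f₁ + eig f₂ = 2 * s := by rw [← hTsum, hT2, Finset.sum_pair hne]
      have hq : (eig f₁) ^ 2 + (eig f₂) ^ 2 = 2 * s ^ 2 + 2 * t ^ 2 := by
        rw [← hTsq, hT2, Finset.sum_pair hne]
      have hzero : ∀ i, i ≠ f₁ → i ≠ f₂ → eig i = 0 := by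
        intro i hi1 hi2
        apply hTout
        rw [hT2]
        simp [hi1, hi2]
      rcases pair_eq (p := eig f₁) (q := eig f₂) (P := s + t) (Q := s - t)
        (by rw [hp]; ring) (by rw [hq]; ring) with ⟨ha, hb⟩ | ⟨ha, hb⟩
      · exact exists_perm_pad hd eig (s + t) (s - t) f₁ f₂ hne ha hb hzero
      · exact exists_perm_pad hd eig (s + t) (s - t) f₂ f₁ hne.symm hb ha
          (fun i h1 h2 => hzero i h2 h1)
  obtain ⟨σ, hσ⟩ := hperm
  calc Φ.N (2 + e) S
      = Φ.N (2 + e) (Matrix.diagonal fun i => (eig i : ℂ)) := N_spectral Φ S hH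
    _ = Φ.N (2 + e) (Matrix.diagonal ((fun i => (eig i : ℂ)) ∘ σ)) :=
        (N_diag_perm Φ _ σ).symm
    _ = Φ.N (2 + e) (Matrix.diagonal fun i => ((padVec (2 + e) ![s + t, s - t] i : ℝ) : ℂ)) := by
        congr 1
        refine congrArg Matrix.diagonal (funext fun i => ?_)
        simp only [Function.comp_apply]
        exact_mod_cast congrArg (fun r : ℝ => (r : ℂ)) (hσ i)
    _ = Φ.psi ![s + t, s - t] := pad_psi Φ e _

end Aux5

section Aux6

open Matrix

lemma const_erase_sum {m : ℕ} (hm : 1 ≤ m) (r : ℝ) :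
    ∑ _i : Fin m, ∑ _j ∈ Finset.univ.erase _i, r = (m : ℝ) * ((m : ℝ) - 1) * r := by
  have h1 : ∀ i : Fin m, ∑ _j ∈ Finset.univ.erase i, r = ((m : ℝ) - 1) * r := by
    intro i
    rw [Finset.sum_const, Finset.card_erase_of_mem (Finset.mem_univ i), Finset.card_univ,
      Fintype.card_fin, nsmul_eq_mul]
    congr 1
    rw [Nat.cast_sub hm, Nat.cast_one]
  rw [Finset.sum_congr rfl (fun i _ => h1 i), Finset.sum_const, Finset.card_univ,
    Fintype.card_fin, nsmul_eq_mul]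
  ring

lemma real_sq_eq {x y : ℝ} (h : x ^ 2 = y ^ 2) (hx : 0 ≤ x) (hy : 0 ≤ y) : x = y := by
  calc x = Real.sqrt (x ^ 2) := (Real.sqrt_sq hx).symm
    _ = Real.sqrt (y ^ 2) := by rw [h]
    _ = y := Real.sqrt_sq hy

end Aux6

theorem stmt15 (m d : ℕ) (hm : 2 ≤ m) (hd : 1 < d) (hdm : d < m)
    (Φ : CUIN ℂ) (V : Fin m → Matrix (Fin 1) (Fin d) ℂ)
    (hproto : ∑ i, (V i)ᴴ * V i = 1)
    (huw : ∀ i, V i * (V i)ᴴ = ((d : ℂ) / (m : ℂ)) • 1) :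
    (∃ i j : Fin m, i ≠ j ∧ cmld m 1 d ≤ ‖(V i * (V j)ᴴ) 0 0‖) ∧
    Φ.psi (![(d : ℝ) / m + cmld m 1 d, (d : ℝ) / m - cmld m 1 d]) ≤ errP Φ 2 V ∧
    ((∀ i j : Fin m, i ≠ j → ∃ q : ℂ, ‖q‖ = 1 ∧
        V i * (V j)ᴴ = ((cmld m 1 d : ℂ) * q) • 1) →
      errP Φ 2 V = Φ.psi (![(d : ℝ) / m + cmld m 1 d, (d : ℝ) / m - cmld m 1 d])) ∧
    (Φ.TwoStronglyStrict →
      errP Φ 2 V = Φ.psi (![(d : ℝ) / m + cmld m 1 d, (d : ℝ) / m - cmld m 1 d]) →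
      ∀ i j : Fin m, i ≠ j → ‖(V i * (V j)ᴴ) 0 0‖ = cmld m 1 d) := by
  classical
  set s : ℝ := (d : ℝ) / m with hsdef
  set c : ℝ := cmld m 1 d with hcdef
  have hm0 : (0 : ℝ) < m := by exact_mod_cast (by omega : 0 < m)
  have hd0 : (0 : ℝ) < d := by exact_mod_cast (by omega : 0 < d)
  have hdm' : (d : ℝ) < m := by exact_mod_cast hdm
  have hm1 : (1 : ℝ) < m := by exact_mod_cast (by omega : 1 < m)
  have hs_pos : 0 < s := by rw [hsdef]; positivity
  have hs_lt1 : s < 1 := by rw [hsdef, div_lt_one hm0]; exact hdm'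
  have hc0 : 0 ≤ c := Real.sqrt_nonneg _
  have harg : 0 ≤ (d : ℝ) / (((m : ℝ) - 1) * m * 1) * (1 - (d : ℝ) / ((m : ℝ) * 1)) := by
    apply mul_nonneg
    · apply div_nonneg hd0.le
      nlinarith
    · rw [mul_one]
      have : (d : ℝ) / m < 1 := by rw [div_lt_one hm0]; exact hdm'
      linarith
  have hm1' : (m : ℝ) - 1 ≠ 0 := by linarith
  have hmne : (m : ℝ) ≠ 0 := ne_of_gt hm0
  have hc2 : (m : ℝ) * ((m : ℝ) - 1) * c ^ 2 = (d : ℝ) * (1 - s) := by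
    rw [hcdef, cmld, Real.sq_sqrt (by exact_mod_cast harg), hsdef]
    push_cast
    rw [mul_one, mul_one]
    field_simp
  -- uniform weights with real scalar
  have huw' : ∀ i, V i * (V i)ᴴ = ((s : ℝ) : ℂ) • 1 := by
    intro i
    rw [huw i]
    congr 1
    rw [hsdef]
    push_cast
    ring
  -- the key trace identity
  have key : ∀ i j, ((V i)ᴴ * V i * ((V j)ᴴ * V j)).trace =
      ((‖(V i * (V j)ᴴ) 0 0‖ ^ 2 : ℝ) : ℂ) := by
    intro i j
    have h1 : (V i)ᴴ * V i * ((V j)ᴴ * V j) = (V i)ᴴ * (V i * (V j)ᴴ * V j) := by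
      simp only [Matrix.mul_assoc]
    rw [h1, Matrix.trace_mul_comm]
    have h2 : V i * (V j)ᴴ * V j * (V i)ᴴ = (V i * (V j)ᴴ) * (V i * (V j)ᴴ)ᴴ := by
      rw [Matrix.conjTranspose_mul, Matrix.conjTranspose_conjTranspose, Matrix.mul_assoc]
    rw [h2, trace_1x1_mul_conj]
  -- total sum of |a i j|^2 equals d
  have hQC : ∑ i, ∑ j, ((‖(V i * (V j)ᴴ) 0 0‖ ^ 2 : ℝ) : ℂ) = (d : ℂ) := by
    have h1 : ∑ i, ∑ j, ((‖(V i * (V j)ᴴ) 0 0‖ ^ 2 : ℝ) : ℂ) =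
        ∑ i, ∑ j, ((V i)ᴴ * V i * ((V j)ᴴ * V j)).trace := by
      refine Finset.sum_congr rfl fun i _ => Finset.sum_congr rfl fun j _ => (key i j).symm
    rw [h1]
    have h2 : ∑ i, ∑ j, ((V i)ᴴ * V i * ((V j)ᴴ * V j)).trace =
        ((∑ i, (V i)ᴴ * V i) * (∑ j, (V j)ᴴ * V j)).trace := by
      rw [Matrix.sum_mul]
      rw [Matrix.trace_sum]
      refine Finset.sum_congr rfl fun i _ => ?_
      rw [Matrix.mul_sum, Matrix.trace_sum]
    rw [h2, hproto, one_mul, Matrix.trace_one]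
    simp
  have hQR : ∑ i, ∑ j, ‖(V i * (V j)ᴴ) 0 0‖ ^ 2 = (d : ℝ) := by
    have h2 : ((∑ i, ∑ j, ‖(V i * (V j)ᴴ) 0 0‖ ^ 2 : ℝ) : ℂ) = ((d : ℝ) : ℂ) := by
      push_cast
      push_cast at hQC
      exact hQC
    exact_mod_cast h2
  -- diagonal entries
  have hdiag : ∀ i, ‖(V i * (V i)ᴴ) 0 0‖ ^ 2 = s ^ 2 := by
    intro i
    have h1 : (V i * (V i)ᴴ) 0 0 = ((s : ℝ) : ℂ) := by
      rw [huw' i, Matrix.smul_apply, Matrix.one_apply_eq, smul_eq_mul, mul_one]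
    rw [h1, Complex.norm_real, Real.norm_eq_abs, abs_of_nonneg hs_pos.le]
  -- off-diagonal sum
  have hoff : ∑ i, ∑ j ∈ Finset.univ.erase i, ‖(V i * (V j)ᴴ) 0 0‖ ^ 2 =
      (m : ℝ) * ((m : ℝ) - 1) * c ^ 2 := by
    have h1 : ∀ i : Fin m, ∑ j ∈ Finset.univ.erase i, ‖(V i * (V j)ᴴ) 0 0‖ ^ 2 =
        (∑ j, ‖(V i * (V j)ᴴ) 0 0‖ ^ 2) - s ^ 2 := by
      intro i
      rw [← Finset.sum_erase_add Finset.univ _ (Finset.mem_univ i), hdiag i]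
      ring
    rw [Finset.sum_congr rfl (fun i _ => h1 i), Finset.sum_sub_distrib, hQR,
      Finset.sum_const, Finset.card_univ, Fintype.card_fin, nsmul_eq_mul, hc2]
    rw [hsdef]
    field_simp
  -- maximizer over off-diagonal pairs
  have hne01 : (⟨0, by omega⟩ : Fin m) ≠ ⟨1, by omega⟩ := by simp [Fin.ext_iff]
  set Fset : Finset (Fin m × Fin m) :=
    (Finset.univ ×ˢ Finset.univ).filter (fun p => p.1 ≠ p.2) with hFsetdef
  have hFne : Fset.Nonempty :=
    ⟨(⟨0, by omega⟩, ⟨1, by omega⟩), Finset.mem_filter.mpr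
      ⟨Finset.mem_product.mpr ⟨Finset.mem_univ _, Finset.mem_univ _⟩, hne01⟩⟩
  obtain ⟨pM, hpmem, hpmax⟩ :=
    Finset.exists_max_image Fset (fun p => ‖(V p.1 * (V p.2)ᴴ) 0 0‖) hFne
  have hMne : pM.1 ≠ pM.2 := (Finset.mem_filter.mp hpmem).2
  set M : ℝ := ‖(V pM.1 * (V pM.2)ᴴ) 0 0‖ with hMdef
  have hM0 : 0 ≤ M := norm_nonneg _
  have hMmax : ∀ i j : Fin m, i ≠ j → ‖(V i * (V j)ᴴ) 0 0‖ ≤ M := by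
    intro i j hij
    exact hpmax (i, j) (Finset.mem_filter.mpr
      ⟨Finset.mem_product.mpr ⟨Finset.mem_univ _, Finset.mem_univ _⟩, hij⟩)
  have hcM : c ≤ M := by
    have hsum_le : (m : ℝ) * ((m : ℝ) - 1) * c ^ 2 ≤ (m : ℝ) * ((m : ℝ) - 1) * M ^ 2 := by
      rw [← hoff, ← const_erase_sum (by omega : 1 ≤ m) (M ^ 2)]
      refine Finset.sum_le_sum fun i _ => Finset.sum_le_sum fun j hj => ?_
      have hji : j ≠ i := (Finset.mem_erase.mp hj).1
      exact pow_le_pow_left₀ (norm_nonneg _) (hMmax i j hji.symm) 2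
    have hc2M : c ^ 2 ≤ M ^ 2 := by
      have hpos : 0 < (m : ℝ) * ((m : ℝ) - 1) := by nlinarith
      exact le_of_mul_le_mul_left hsum_le hpos
    calc c = Real.sqrt (c ^ 2) := (Real.sqrt_sq hc0).symm
      _ ≤ Real.sqrt (M ^ 2) := Real.sqrt_le_sqrt hc2M
      _ = M := Real.sqrt_sq hM0
  -- errP structure
  set Sset : Set ℝ :=
    {r : ℝ | ∃ K : Finset (Fin m), K.card = 2 ∧ r = Φ.N d (∑ i ∈ K, (V i)ᴴ * V i)} with hSsetdef
  have herrP : errP Φ 2 V = sSup Sset := rfl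
  have hbdd : BddAbove Sset := by
    apply Set.Finite.bddAbove
    apply (Set.finite_range (fun K : Finset (Fin m) => Φ.N d (∑ i ∈ K, (V i)ᴴ * V i))).subset
    rintro r ⟨K, _, rfl⟩
    exact ⟨K, rfl⟩
  have hmemS : ∀ i j : Fin m, i ≠ j →
      Φ.N d ((V i)ᴴ * V i + (V j)ᴴ * V j) ∈ Sset := by
    intro i j hij
    exact ⟨{i, j}, Finset.card_pair hij, by rw [Finset.sum_pair hij]⟩
  have hnormS : ∀ i j : Fin m, i ≠ j →
      Φ.N d ((V i)ᴴ * V i + (V j)ᴴ * V j) =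
        Φ.psi ![s + ‖(V i * (V j)ᴴ) 0 0‖, s - ‖(V i * (V j)ᴴ) 0 0‖] := by
    intro i j hij
    exact normS Φ (by omega : 2 ≤ d) s ‖(V i * (V j)ᴴ) 0 0‖ hs_pos (V i) (V j)
      (huw' i) (huw' j) rfl
  -- Part 2
  have hpart2 : Φ.psi ![s + c, s - c] ≤ errP Φ 2 V := by
    calc Φ.psi ![s + c, s - c] ≤ Φ.psi ![s + M, s - M] := psi_mono Φ s c M hc0 hcM
      _ = Φ.N d ((V pM.1)ᴴ * V pM.1 + (V pM.2)ᴴ * V pM.2) := (hnormS pM.1 pM.2 hMne).symm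
      _ ≤ errP Φ 2 V := le_csSup hbdd (hmemS pM.1 pM.2 hMne)
  refine ⟨⟨pM.1, pM.2, hMne, hcM⟩, hpart2, ?_, ?_⟩
  -- Part 3
  · intro hall
    have hsub : ∀ r ∈ Sset, r = Φ.psi ![s + c, s - c] := by
      rintro r ⟨K, hK2, rfl⟩
      obtain ⟨i, j, hij, rfl⟩ := Finset.card_eq_two.mp hK2
      rw [Finset.sum_pair hij, hnormS i j hij]
      obtain ⟨q, hq1, hqe⟩ := hall i j hij
      have hnc : ‖(V i * (V j)ᴴ) 0 0‖ = c := by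
        rw [hqe, Matrix.smul_apply, Matrix.one_apply_eq, smul_eq_mul, mul_one,
          norm_mul, hq1, mul_one, Complex.norm_real, Real.norm_eq_abs, abs_of_nonneg hc0]
      rw [hnc]
    have hOne : Sset = {Φ.psi ![s + c, s - c]} := by
      apply Set.eq_singleton_iff_unique_mem.mpr
      constructor
      · have h := hmemS ⟨0, by omega⟩ ⟨1, by omega⟩ hne01
        have h2 := hsub _ h
        rw [← h2]
        exact h
      · exact hsub
    rw [herrP, hOne, csSup_singleton]
  -- Part 4
  · intro hTS heq i j hij
    -- step A : all off-diagonal entries are ≤ c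
    have hle : ∀ i' j' : Fin m, i' ≠ j' → ‖(V i' * (V j')ᴴ) 0 0‖ ≤ c := by
      intro i' j' hij'
      by_contra hgt
      push_neg at hgt
      set t : ℝ := ‖(V i' * (V j')ᴴ) 0 0‖ with htdef
      have hψt_le : Φ.psi ![s + t, s - t] ≤ errP Φ 2 V := by
        rw [← hnormS i' j' hij']
        exact le_csSup hbdd (hmemS i' j' hij')
      rw [heq] at hψt_le
      have hψc_le : Φ.psi ![s + c, s - c] ≤ Φ.psi ![s + t, s - t] :=
        psi_mono Φ s c t hc0 hgt.le
      have hψeq : Φ.psi ![s + c, s - c] = Φ.psi ![s + t, s - t] :=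
        le_antisymm hψc_le hψt_le
      set A : Matrix (Fin 2) (Fin 2) ℂ :=
        Matrix.diagonal fun k => (((![s + c, s - c]) k : ℝ) : ℂ) with hAdef
      set B : Matrix (Fin 2) (Fin 2) ℂ :=
        Matrix.diagonal fun k => (((![s + t, s - t]) k : ℝ) : ℂ) with hBdef
      obtain ⟨U, hU, hAB⟩ := hTS.2 A B (diag_real_herm _) (diag_real_herm _)
        (maj_two s c t hc0 hgt.le)
        (by rw [hAdef, hBdef, ← psi_eq, ← psi_eq]; exact hψeq)
      have htr := trace_conj_sq A B U hU hAB
      rw [hAdef, hBdef, Matrix.diagonal_mul_diagonal, Matrix.diagonal_mul_diagonal,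
        Matrix.trace_diagonal, Matrix.trace_diagonal, Fin.sum_univ_two, Fin.sum_univ_two] at htr
      simp only [Matrix.cons_val_zero, Matrix.cons_val_one, Matrix.head_cons] at htr
      have htrR : (s + c) * (s + c) + (s - c) * (s - c) =
          (s + t) * (s + t) + (s - t) * (s - t) := by
        have h2 : (((s + c) * (s + c) + (s - c) * (s - c) : ℝ) : ℂ) =
            (((s + t) * (s + t) + (s - t) * (s - t) : ℝ) : ℂ) := by
          push_cast
          push_cast at htr
          exact htr
        exact_mod_cast h2
      have hct2 : c ^ 2 = t ^ 2 := by linear_combination htrR / 2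
      have : c = t := real_sq_eq hct2 hc0 (norm_nonneg _)
      rw [this] at hgt
      exact lt_irrefl t hgt
    -- step B : sum forces equality
    have hsum0 : ∑ i', ∑ j' ∈ Finset.univ.erase i',
        (c ^ 2 - ‖(V i' * (V j')ᴴ) 0 0‖ ^ 2) = 0 := by
      rw [Finset.sum_congr rfl (fun i' _ => Finset.sum_sub_distrib _ _), Finset.sum_sub_distrib,
        hoff, const_erase_sum (by omega : 1 ≤ m) (c ^ 2)]
      ring
    have hterm : ∀ i' ∈ (Finset.univ : Finset (Fin m)), ∀ j' ∈ Finset.univ.erase i',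
        (0 : ℝ) ≤ c ^ 2 - ‖(V i' * (V j')ᴴ) 0 0‖ ^ 2 := by
      intro i' _ j' hj'
      have hji : j' ≠ i' := (Finset.mem_erase.mp hj').1
      have h1 := pow_le_pow_left₀ (norm_nonneg _) (hle i' j' hji.symm) 2
      linarith
    have hzero : ∀ i' ∈ (Finset.univ : Finset (Fin m)), ∀ j' ∈ Finset.univ.erase i',
        c ^ 2 - ‖(V i' * (V j')ᴴ) 0 0‖ ^ 2 = 0 := by
      have houter := (Finset.sum_eq_zero_iff_of_nonneg
        (fun i' hi' => Finset.sum_nonneg (hterm i' hi'))).mp hsum0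
      intro i' hi' j' hj'
      exact (Finset.sum_eq_zero_iff_of_nonneg (hterm i' hi')).mp (houter i' hi') j' hj'
    have hj_mem : j ∈ Finset.univ.erase i := Finset.mem_erase.mpr ⟨hij.symm, Finset.mem_univ j⟩
    have h0 := hzero i (Finset.mem_univ i) j hj_mem
    have h2 : ‖(V i * (V j)ᴴ) 0 0‖ ^ 2 = c ^ 2 := by linarith
    exact real_sq_eq h2 (norm_nonneg _) hc0
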